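/- Let φ : [0,1]^m → [0,1]^m be Lipschitz continuous with constant L_φ and f : [0,1]^m → ℝ continuous. Then for degrees n_1,...,n_m ≥ 1, sup_{x∈[0,1]^m} |B_𝐧(f∘φ; x) − f(φ(x))| ≤ (3/2) Ω_f(L_φ √(∑_{l=1}^m 1/n_l)). -/

import Mathlib

noncomputable def bern (n k : ℕ) (x : ℝ) : ℝ :=
  (n.choose k : ℝ) * x ^ k * (1 - x) ^ (n - k)

noncomputable def bernOpM (m : ℕ) (n : Fin m → ℕ) (f : (Fin m → ℝ) → ℝ) (x : Fin m → ℝ) : ℝ :=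
  ∑ k : (∀ l : Fin m, Fin (n l + 1)),
    f (fun l => (k l : ℝ) / (n l : ℝ)) * ∏ l : Fin m, bern (n l) (k l) (x l)

noncomputable def eudist {m : ℕ} (x y : Fin m → ℝ) : ℝ :=
  Real.sqrt (∑ l : Fin m, (x l - y l) ^ 2)

noncomputable def modContM (m : ℕ) (f : (Fin m → ℝ) → ℝ) (δ : ℝ) : ℝ :=
  sSup {r : ℝ | ∃ x ∈ Set.Icc (0 : Fin m → ℝ) 1, ∃ y ∈ Set.Icc (0 : Fin m → ℝ) 1,
    eudist x y ≤ δ ∧ r = |f x - f y|}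

section Aux

lemma bern_eq_bernstein (n k : ℕ) (x : ℝ) (hx : x ∈ Set.Icc (0:ℝ) 1) :
    bern n k x = bernstein n k ⟨x, hx⟩ := by
  rw [bernstein_apply]; rfl

lemma bern_nonneg {n k : ℕ} {x : ℝ} (h0 : 0 ≤ x) (h1 : x ≤ 1) : 0 ≤ bern n k x := by
  have h2 : (0:ℝ) ≤ 1 - x := by linarith
  unfold bern; positivity

lemma bern_sum (n : ℕ) (x : ℝ) (hx : x ∈ Set.Icc (0:ℝ) 1) :
    ∑ k : Fin (n+1), bern n (k : ℕ) x = 1 := by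
  have h := bernstein.probability n ⟨x, hx⟩
  simp only [bern_eq_bernstein _ _ _ hx]
  exact h

lemma bern_var (n : ℕ) (hn : 1 ≤ n) (x : ℝ) (hx : x ∈ Set.Icc (0:ℝ) 1) :
    ∑ k : Fin (n+1), ((k:ℝ)/(n:ℝ) - x)^2 * bern n (k : ℕ) x = x * (1-x) / n := by
  have hpos : 0 < (n:ℝ) := by exact_mod_cast hn
  have h := bernstein.variance (by omega : n ≠ 0) (⟨x, hx⟩ : unitInterval)
  rw [← h]
  apply Finset.sum_congr rfl
  intro k _
  rw [bern_eq_bernstein _ _ _ hx]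
  congr 1
  have hz : ((bernstein.z k : ℝ)) = (k:ℝ)/(n:ℝ) := rfl
  rw [hz]
  ring

lemma W_nonneg {m : ℕ} (n : Fin m → ℕ) (x : Fin m → ℝ)
    (hx : x ∈ Set.Icc (0 : Fin m → ℝ) 1) (k : ∀ l : Fin m, Fin (n l + 1)) :
    0 ≤ ∏ l : Fin m, bern (n l) (k l) (x l) :=
  Finset.prod_nonneg fun l _ => bern_nonneg (hx.1 l) (hx.2 l)

lemma W_sum {m : ℕ} (n : Fin m → ℕ) (x : Fin m → ℝ)
    (hx : x ∈ Set.Icc (0 : Fin m → ℝ) 1) :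
    ∑ k : (∀ l : Fin m, Fin (n l + 1)), ∏ l : Fin m, bern (n l) (k l) (x l) = 1 := by
  rw [← Fintype.prod_sum (fun l (j : Fin (n l + 1)) => bern (n l) (j : ℕ) (x l))]
  exact Finset.prod_eq_one fun l _ => bern_sum (n l) (x l) ⟨hx.1 l, hx.2 l⟩

lemma W_var {m : ℕ} (n : Fin m → ℕ) (hn : ∀ l, 1 ≤ n l) (x : Fin m → ℝ)
    (hx : x ∈ Set.Icc (0 : Fin m → ℝ) 1) :
    ∑ k : (∀ l : Fin m, Fin (n l + 1)),
      (∑ l : Fin m, ((k l : ℝ)/(n l : ℝ) - x l)^2) * ∏ l : Fin m, bern (n l) (k l) (x l)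
    = ∑ l : Fin m, x l * (1 - x l) / (n l : ℝ) := by
  have main : ∀ l0 : Fin m,
      ∑ k : (∀ l : Fin m, Fin (n l + 1)),
        ((k l0 : ℝ)/(n l0 : ℝ) - x l0)^2 * ∏ l : Fin m, bern (n l) (k l) (x l)
      = x l0 * (1 - x l0) / (n l0 : ℝ) := by
    intro l0
    have hterm : ∀ k : (∀ l : Fin m, Fin (n l + 1)),
        ((k l0 : ℝ)/(n l0 : ℝ) - x l0)^2 * ∏ l : Fin m, bern (n l) (k l) (x l)
        = ∏ l : Fin m,
            ((if l = l0 then ((k l : ℝ)/(n l : ℝ) - x l)^2 else 1) * bern (n l) (k l) (x l)) := by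
      intro k
      rw [Finset.prod_mul_distrib, Finset.prod_ite_eq' Finset.univ l0
        (fun l => ((k l : ℝ)/(n l : ℝ) - x l)^2), if_pos (Finset.mem_univ l0)]
    rw [Finset.sum_congr rfl fun k _ => hterm k,
      ← Fintype.prod_sum (fun l (j : Fin (n l + 1)) =>
        (if l = l0 then ((j : ℝ)/(n l : ℝ) - x l)^2 else 1) * bern (n l) (j : ℕ) (x l))]
    rw [Finset.prod_eq_single l0 ?_ ?_]
    · simp only [if_pos rfl]
      exact bern_var (n l0) (hn l0) (x l0) ⟨hx.1 l0, hx.2 l0⟩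
    · intro b _ hb
      simp only [if_neg hb, one_mul]
      exact bern_sum (n b) (x b) ⟨hx.1 b, hx.2 b⟩
    · intro h; exact absurd (Finset.mem_univ l0) h
  calc ∑ k : (∀ l : Fin m, Fin (n l + 1)),
        (∑ l : Fin m, ((k l : ℝ)/(n l : ℝ) - x l)^2) * ∏ l : Fin m, bern (n l) (k l) (x l)
      = ∑ k : (∀ l : Fin m, Fin (n l + 1)), ∑ l0 : Fin m,
        ((k l0 : ℝ)/(n l0 : ℝ) - x l0)^2 * ∏ l : Fin m, bern (n l) (k l) (x l) := by
        simp_rw [Finset.sum_mul]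
    _ = ∑ l0 : Fin m, ∑ k : (∀ l : Fin m, Fin (n l + 1)),
        ((k l0 : ℝ)/(n l0 : ℝ) - x l0)^2 * ∏ l : Fin m, bern (n l) (k l) (x l) :=
        Finset.sum_comm
    _ = ∑ l0 : Fin m, x l0 * (1 - x l0) / (n l0 : ℝ) :=
        Finset.sum_congr rfl fun l0 _ => main l0

lemma eudist_nonneg' {m : ℕ} (x y : Fin m → ℝ) : 0 ≤ eudist x y := Real.sqrt_nonneg _

lemma eudist_self' {m : ℕ} (x : Fin m → ℝ) : eudist x x = 0 := by simp [eudist]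

lemma zero_mem_Icc' {m : ℕ} : (0 : Fin m → ℝ) ∈ Set.Icc (0 : Fin m → ℝ) 1 :=
  ⟨le_rfl, fun _ => zero_le_one⟩

lemma modCont_bdd {m : ℕ} (f : (Fin m → ℝ) → ℝ)
    (hf : ContinuousOn f (Set.Icc (0 : Fin m → ℝ) 1)) (δ : ℝ) :
    BddAbove {r : ℝ | ∃ x ∈ Set.Icc (0 : Fin m → ℝ) 1, ∃ y ∈ Set.Icc (0 : Fin m → ℝ) 1,
      eudist x y ≤ δ ∧ r = |f x - f y|} := by
  obtain ⟨C, hC⟩ := (isCompact_Icc (a := (0 : Fin m → ℝ)) (b := 1)).exists_bound_of_continuousOn hf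
  refine ⟨2 * C, ?_⟩
  rintro r ⟨x, hx, y, hy, -, rfl⟩
  have h1 := hC x hx
  have h2 := hC y hy
  simp only [Real.norm_eq_abs] at h1 h2
  calc |f x - f y| ≤ |f x| + |f y| := abs_sub _ _
    _ ≤ 2 * C := by linarith

lemma modCont_le {m : ℕ} (f : (Fin m → ℝ) → ℝ)
    (hf : ContinuousOn f (Set.Icc (0 : Fin m → ℝ) 1)) {δ : ℝ} {x y : Fin m → ℝ}
    (hx : x ∈ Set.Icc (0 : Fin m → ℝ) 1) (hy : y ∈ Set.Icc (0 : Fin m → ℝ) 1)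
    (hxy : eudist x y ≤ δ) : |f x - f y| ≤ modContM m f δ :=
  le_csSup (modCont_bdd f hf δ) ⟨x, hx, y, hy, hxy, rfl⟩

lemma modCont_nonneg {m : ℕ} (f : (Fin m → ℝ) → ℝ)
    (hf : ContinuousOn f (Set.Icc (0 : Fin m → ℝ) 1)) {δ : ℝ} (hδ : 0 ≤ δ) :
    0 ≤ modContM m f δ := by
  have h := modCont_le f hf (δ := δ) zero_mem_Icc' zero_mem_Icc'
    (by rw [eudist_self']; exact hδ)
  have := abs_nonneg (f 0 - f 0)
  linarith

lemma chain {m : ℕ} (f : (Fin m → ℝ) → ℝ)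
    (hf : ContinuousOn f (Set.Icc (0 : Fin m → ℝ) 1)) {u v : Fin m → ℝ}
    (hu : u ∈ Set.Icc (0 : Fin m → ℝ) 1) (hv : v ∈ Set.Icc (0 : Fin m → ℝ) 1)
    {L σ s : ℝ} (hL : 0 ≤ L) (hσ : 0 < σ) (hs : 0 ≤ s) (huv : eudist u v ≤ L * s) :
    |f u - f v| ≤ (1 + s / σ) * modContM m f (L * σ) := by
  set N : ℕ := max 1 ⌈s / σ⌉₊ with hNdef
  have hN1 : 1 ≤ N := le_max_left _ _
  have hNpos : (0:ℝ) < (N:ℝ) := by exact_mod_cast Nat.lt_of_lt_of_le Nat.zero_lt_one hN1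
  have hNge : s / σ ≤ (N:ℝ) := by
    refine le_trans (Nat.le_ceil _) ?_
    exact_mod_cast le_max_right 1 ⌈s / σ⌉₊
  have hsN : s ≤ (N:ℝ) * σ := by
    rw [div_le_iff₀ hσ] at hNge; linarith
  have hNle : (N:ℝ) ≤ 1 + s / σ := by
    rcases Nat.lt_or_ge ⌈s / σ⌉₊ 1 with h | h
    · have hN1' : N = 1 := by omega
      rw [hN1']
      have : 0 ≤ s / σ := div_nonneg hs hσ.le
      push_cast; linarith
    · have hNe : N = ⌈s / σ⌉₊ := max_eq_right h
      rw [hNe]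
      have := Nat.ceil_lt_add_one (div_nonneg hs hσ.le)
      linarith
  set z : ℕ → (Fin m → ℝ) := fun i l => u l + ((i:ℝ)/(N:ℝ)) * (v l - u l) with hzdef
  have hz0 : z 0 = u := by funext l; simp [hzdef]
  have hzN : z N = v := by
    funext l; simp only [hzdef]
    rw [div_self hNpos.ne']; ring
  have hzmem : ∀ i : ℕ, i ≤ N → z i ∈ Set.Icc (0 : Fin m → ℝ) 1 := by
    intro i hi
    have ht0 : (0:ℝ) ≤ (i:ℝ)/(N:ℝ) := by positivity
    have ht1 : (i:ℝ)/(N:ℝ) ≤ 1 := by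
      rw [div_le_one hNpos]; exact_mod_cast hi
    constructor <;> intro l
    · have h1 : (0:ℝ) ≤ u l := hu.1 l
      have h2 : u l ≤ 1 := hu.2 l
      have h3 : (0:ℝ) ≤ v l := hv.1 l
      have h4 : v l ≤ 1 := hv.2 l
      show (0:ℝ) ≤ u l + ((i:ℝ)/(N:ℝ)) * (v l - u l)
      nlinarith
    · have h1 : (0:ℝ) ≤ u l := hu.1 l
      have h2 : u l ≤ 1 := hu.2 l
      have h3 : (0:ℝ) ≤ v l := hv.1 l
      have h4 : v l ≤ 1 := hv.2 l
      show u l + ((i:ℝ)/(N:ℝ)) * (v l - u l) ≤ 1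
      nlinarith
  have hstep : ∀ i : ℕ, eudist (z i) (z (i+1)) ≤ L * σ := by
    intro i
    have heq : eudist (z i) (z (i+1)) = eudist u v / N := by
      unfold eudist
      have hc : ∀ l, (z i l - z (i+1) l)^2 = (1/(N:ℝ))^2 * (u l - v l)^2 := by
        intro l; simp only [hzdef]; push_cast; field_simp; ring
      rw [Finset.sum_congr rfl fun l _ => hc l, ← Finset.mul_sum,
        Real.sqrt_mul (by positivity), Real.sqrt_sq (by positivity)]
      ring
    rw [heq]
    have h1 : eudist u v / N ≤ L * s / N := by gcongr
    have h2 : L * s / N ≤ L * σ := by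
      rw [div_le_iff₀ hNpos]
      nlinarith [mul_le_mul_of_nonneg_left hsN hL]
    linarith
  have key : f u - f v = ∑ i ∈ Finset.range N, (f (z i) - f (z (i+1))) := by
    rw [Finset.sum_range_sub' (fun i => f (z i)), hz0, hzN]
  have hΩ : 0 ≤ modContM m f (L * σ) := modCont_nonneg f hf (by positivity)
  calc |f u - f v| = |∑ i ∈ Finset.range N, (f (z i) - f (z (i+1)))| := by rw [key]
    _ ≤ ∑ i ∈ Finset.range N, |f (z i) - f (z (i+1))| := Finset.abs_sum_le_sum_abs _ _
    _ ≤ ∑ _i ∈ Finset.range N, modContM m f (L * σ) := by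
        refine Finset.sum_le_sum fun i hi => ?_
        have hiN := Finset.mem_range.mp hi
        exact modCont_le f hf (hzmem i hiN.le) (hzmem (i+1) hiN) (hstep i)
    _ = (N:ℝ) * modContM m f (L * σ) := by
        rw [Finset.sum_const, Finset.card_range, nsmul_eq_mul]
    _ ≤ (1 + s / σ) * modContM m f (L * σ) := mul_le_mul_of_nonneg_right hNle hΩ

end Aux

theorem stmt15 (m : ℕ) (n : Fin m → ℕ) (hn : ∀ l, 1 ≤ n l)
    (φ : (Fin m → ℝ) → (Fin m → ℝ))
    (hφmap : Set.MapsTo φ (Set.Icc (0 : Fin m → ℝ) 1) (Set.Icc (0 : Fin m → ℝ) 1))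
    (Lφ : ℝ)
    (hL : ∀ x ∈ Set.Icc (0 : Fin m → ℝ) 1, ∀ y ∈ Set.Icc (0 : Fin m → ℝ) 1,
      eudist (φ x) (φ y) ≤ Lφ * eudist x y)
    (f : (Fin m → ℝ) → ℝ)
    (hf : ContinuousOn f (Set.Icc (0 : Fin m → ℝ) 1)) :
    (⨆ x : Set.Icc (0 : Fin m → ℝ) 1, |bernOpM m n (f ∘ φ) x - f (φ x)|)
      ≤ (3 / 2) * modContM m f (Lφ * Real.sqrt (∑ l : Fin m, 1 / (n l : ℝ))) := by
  haveI : Nonempty (Set.Icc (0 : Fin m → ℝ) 1) := ⟨⟨0, zero_mem_Icc'⟩⟩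
  apply ciSup_le
  rintro ⟨x, hx⟩
  show |bernOpM m n (f ∘ φ) x - f (φ x)| ≤ _
  rcases Nat.eq_zero_or_pos m with hm | hm
  · subst hm
    have h0 : bernOpM 0 n (f ∘ φ) x = f (φ x) := by
      rw [bernOpM, Fintype.sum_unique]
      have h2 : ∀ y : Fin 0 → ℝ, (f ∘ φ) y = f (φ x) := fun y => by
        rw [Subsingleton.elim y x]; rfl
      simp only [Function.comp_apply, Finset.univ_eq_empty, Finset.prod_empty, mul_one]
      exact congrArg f (congrArg φ (Subsingleton.elim _ _))
    rw [h0, sub_self, abs_zero]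
    have hz : (∑ l : Fin 0, 1/((n l : ℕ):ℝ)) = 0 := by simp
    rw [hz, Real.sqrt_zero, mul_zero]
    have := modCont_nonneg f hf (le_refl (0:ℝ))
    linarith
  · -- m ≥ 1
    set σ : ℝ := Real.sqrt (∑ l : Fin m, 1 / (n l : ℝ)) with hσdef
    have hone : (1 : Fin m → ℝ) ∈ Set.Icc (0 : Fin m → ℝ) 1 := ⟨fun _ => zero_le_one, le_rfl⟩
    have hLφ : 0 ≤ Lφ := by
      have h := hL 0 zero_mem_Icc' 1 hone
      have h0 := eudist_nonneg' (φ (0 : Fin m → ℝ)) (φ 1)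
      have hd : eudist (0 : Fin m → ℝ) 1 = Real.sqrt m := by
        unfold eudist; norm_num
      rw [hd] at h
      have hm' : 0 < Real.sqrt m := Real.sqrt_pos.mpr (by exact_mod_cast hm)
      nlinarith
    have hsum_pos : 0 < ∑ l : Fin m, 1 / (n l : ℝ) := by
      haveI : Nonempty (Fin m) := ⟨⟨0, hm⟩⟩
      refine Finset.sum_pos (fun l _ => ?_) Finset.univ_nonempty
      have : (0:ℝ) < (n l : ℝ) := by exact_mod_cast hn l
      positivity
    have hσ : 0 < σ := Real.sqrt_pos.mpr hsum_pos
    have hσsq : σ^2 = ∑ l : Fin m, 1 / (n l : ℝ) := Real.sq_sqrt hsum_pos.le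
    set p : (∀ l : Fin m, Fin (n l + 1)) → (Fin m → ℝ) :=
      fun k l => (k l : ℝ) / (n l : ℝ) with hpdef
    set W : (∀ l : Fin m, Fin (n l + 1)) → ℝ :=
      fun k => ∏ l : Fin m, bern (n l) (k l) (x l) with hWdef
    set s : (∀ l : Fin m, Fin (n l + 1)) → ℝ := fun k => eudist (p k) x with hsdef
    have hW0 : ∀ k, 0 ≤ W k := fun k => W_nonneg n x hx k
    have hWs : ∑ k, W k = 1 := W_sum n x hx
    have hpmem : ∀ k, p k ∈ Set.Icc (0 : Fin m → ℝ) 1 := by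
      intro k
      constructor <;> intro l
      · have : (0:ℝ) < (n l : ℝ) := by exact_mod_cast hn l
        show (0:ℝ) ≤ (k l : ℝ) / (n l : ℝ)
        positivity
      · have hpos : (0:ℝ) < (n l : ℝ) := by exact_mod_cast hn l
        show (k l : ℝ) / (n l : ℝ) ≤ 1
        rw [div_le_one hpos]
        exact_mod_cast Fin.is_le (k l)
    have hdiff : bernOpM m n (f ∘ φ) x - f (φ x)
        = ∑ k, (f (φ (p k)) - f (φ x)) * W k := by
      rw [bernOpM]
      have hfx : f (φ x) = ∑ k, f (φ x) * W k := by rw [← Finset.mul_sum, hWs, mul_one]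
      nth_rewrite 1 [hfx]
      rw [← Finset.sum_sub_distrib]
      refine Finset.sum_congr rfl fun k _ => ?_
      rw [← sub_mul]
      rfl
    set Ω : ℝ := modContM m f (Lφ * σ) with hΩdef
    have hΩ0 : 0 ≤ Ω := modCont_nonneg f hf (by positivity)
    have hT : ∑ k, s k * W k ≤ σ / 2 := by
      have hCS : ∑ k, s k * W k ≤ Real.sqrt (∑ k, s k ^ 2 * W k) := by
        have h := Real.sum_mul_le_sqrt_mul_sqrt Finset.univ
          (fun k => s k * Real.sqrt (W k)) (fun k => Real.sqrt (W k))
        have e1 : ∑ k, (s k * Real.sqrt (W k)) * Real.sqrt (W k) = ∑ k, s k * W k :=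
          Finset.sum_congr rfl fun k _ => by
            rw [mul_assoc, Real.mul_self_sqrt (hW0 k)]
        have e2 : ∑ k, (s k * Real.sqrt (W k))^2 = ∑ k, s k ^ 2 * W k :=
          Finset.sum_congr rfl fun k _ => by
            rw [mul_pow, Real.sq_sqrt (hW0 k)]
        have e3 : ∑ k, (Real.sqrt (W k))^2 = 1 := by
          rw [Finset.sum_congr rfl fun k _ => Real.sq_sqrt (hW0 k), hWs]
        rw [e1, e2, e3, Real.sqrt_one, mul_one] at h
        exact h
      have hvar : ∑ k, s k ^ 2 * W k ≤ (σ/2)^2 := by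
        have hsq : ∀ k, s k ^ 2 = ∑ l : Fin m, (p k l - x l)^2 := fun k =>
          Real.sq_sqrt (Finset.sum_nonneg fun l _ => sq_nonneg _)
        rw [Finset.sum_congr rfl fun k _ => by rw [hsq k]]
        rw [W_var n hn x hx]
        have hσ4 : (σ/2)^2 = ∑ l : Fin m, 1/(n l : ℝ)/4 := by
          rw [div_pow, hσsq, Finset.sum_div]; norm_num
        rw [hσ4]
        refine Finset.sum_le_sum fun l _ => ?_
        have h0 : (0:ℝ) ≤ x l := hx.1 l
        have h1 : x l ≤ 1 := hx.2 l
        have hnl : (0:ℝ) < (n l : ℝ) := by exact_mod_cast hn l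
        have h14 : x l * (1 - x l) ≤ 1/4 := by nlinarith [sq_nonneg (x l - 1/2)]
        have hinv : (0:ℝ) ≤ 1/(n l : ℝ) := by positivity
        calc x l * (1 - x l) / (n l : ℝ) = x l * (1 - x l) * (1/(n l : ℝ)) := by ring
          _ ≤ (1/4) * (1/(n l : ℝ)) := mul_le_mul_of_nonneg_right h14 hinv
          _ = 1/(n l : ℝ)/4 := by ring
      calc ∑ k, s k * W k ≤ Real.sqrt (∑ k, s k ^ 2 * W k) := hCS
        _ ≤ Real.sqrt ((σ/2)^2) := Real.sqrt_le_sqrt hvar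
        _ = σ/2 := Real.sqrt_sq (by positivity)
    calc |bernOpM m n (f ∘ φ) x - f (φ x)|
        = |∑ k, (f (φ (p k)) - f (φ x)) * W k| := by rw [hdiff]
      _ ≤ ∑ k, |(f (φ (p k)) - f (φ x)) * W k| := Finset.abs_sum_le_sum_abs _ _
      _ = ∑ k, |f (φ (p k)) - f (φ x)| * W k :=
          Finset.sum_congr rfl fun k _ => by rw [abs_mul, abs_of_nonneg (hW0 k)]
      _ ≤ ∑ k, ((1 + s k / σ) * Ω) * W k := by
          refine Finset.sum_le_sum fun k _ => mul_le_mul_of_nonneg_right ?_ (hW0 k)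
          exact chain f hf (hφmap (hpmem k)) (hφmap hx) hLφ hσ (eudist_nonneg' _ _)
            (hL (p k) (hpmem k) x hx)
      _ = Ω * (∑ k, W k) + (Ω/σ) * (∑ k, s k * W k) := by
          rw [Finset.mul_sum, Finset.mul_sum, ← Finset.sum_add_distrib]
          refine Finset.sum_congr rfl fun k _ => ?_
          field_simp
          try ring
      _ ≤ Ω * 1 + (Ω/σ) * (σ/2) := by
          refine add_le_add (le_of_eq (by rw [hWs])) ?_
          exact mul_le_mul_of_nonneg_left hT (div_nonneg hΩ0 hσ.le)
      _ ≤ (3/2) * Ω := by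
          have : (Ω/σ) * (σ/2) = Ω/2 := by
            field_simp
          rw [this]; linarith
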